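/- arXiv:1809.01077 — 2 statements merged into one kernel-verified Lean document; each statement's English description precedes it below -/
import Mathlib

section
/- Let N ≥ 1, b = 2N, and let A be an integer with 1 ≤ A ≤ 2^N. Define R = (A·(3/4)^b + 2^N·(1/4)^b) / (2^N·(3/4)^b + A·(1/4)^b). Then (A/2^N)·(1 − 1/4^N) ≤ R ≤ (A/2^N)·(1 + 1/4^N). -/
theorem stmt_14 (N : ℕ) (hN : 1 ≤ N) (b : ℕ) (hb : b = 2 * N)
    (A : ℕ) (hA1 : 1 ≤ A) (hA2 : A ≤ 2^N)
    (R : ℝ)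
    (hR : R = ((A:ℝ) * (3/4:ℝ)^b + (2:ℝ)^N * (1/4:ℝ)^b) /
      ((2:ℝ)^N * (3/4:ℝ)^b + (A:ℝ) * (1/4:ℝ)^b)) :
    ((A:ℝ)/2^N) * (1 - 1/4^N) ≤ R ∧ R ≤ ((A:ℝ)/2^N) * (1 + 1/4^N) := by
  have hx : (0:ℝ) < (3/4:ℝ)^b := by positivity
  have hy : (0:ℝ) < (1/4:ℝ)^b := by positivity
  have hP : (0:ℝ) < (2:ℝ)^N := by positivity
  have hAp : (1:ℝ) ≤ (A:ℝ) := by exact_mod_cast hA1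
  have hAP : (A:ℝ) ≤ (2:ℝ)^N := by exact_mod_cast hA2
  have heps : (0:ℝ) < (1:ℝ)/4^N := by positivity
  -- key inequality: 2^N * (1/4)^b ≤ (1/4^N) * (3/4)^b
  have hkey : (2:ℝ)^N * (1/4:ℝ)^b ≤ (1/4^N) * (3/4:ℝ)^b := by
    subst hb
    have h1 : (2:ℝ)^N * (1/4:ℝ)^(2*N) = ((1:ℝ)/8)^N := by
      rw [pow_mul, ← mul_pow]; norm_num
    have h2 : ((1:ℝ)/4^N) * (3/4:ℝ)^(2*N) = ((9:ℝ)/64)^N := by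
      rw [pow_mul, one_div, ← inv_pow, ← mul_pow]; norm_num
    rw [h1, h2]
    exact pow_le_pow_left₀ (by norm_num) (by norm_num) N
  have hD : (0:ℝ) < (2:ℝ)^N * (3/4:ℝ)^b + (A:ℝ) * (1/4:ℝ)^b := by positivity
  rw [hR]
  have hA0 : (0:ℝ) < (A:ℝ) := by linarith
  constructor
  · rw [div_mul_eq_mul_div, div_le_div_iff₀ hP hD]
    nlinarith [mul_le_mul_of_nonneg_right (mul_le_mul hAP hAP hA0.le hP.le) hy.le,
      mul_pos (mul_pos heps (mul_pos hA0 hP)) hx,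
      mul_pos (mul_pos heps (mul_pos hA0 hA0)) hy]
  · rw [div_mul_eq_mul_div, div_le_div_iff₀ hD hP]
    nlinarith [mul_le_mul_of_nonneg_left hkey hP.le,
      mul_le_mul_of_nonneg_right hAp (le_of_lt (mul_pos (mul_pos heps hx) hP)),
      mul_pos (mul_pos hA0 hA0) hy,
      mul_pos (mul_pos heps (mul_pos hA0 hA0)) hy]
end

section
/- Let N ≥ 1, b = 2N, 1 ≤ A ≤ 2^N an integer, and R = (A·(3/4)^b + 2^N·(1/4)^b)/(2^N·(3/4)^b + A·(1/4)^b). Then |R − A/2^N| < 1/2^{N+1}, so rounding R to the nearest multiple of 2^{−N} yields exactly A/2^N. -/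
lemma stmt_15_pow (N : ℕ) (hN : 1 ≤ N) : (2:ℝ)^(N+1) < 9^N := by
  have h : 2^(N+1) < 9^N := by
    induction N, hN using Nat.le_induction with
    | base => norm_num
    | succ n hn ih =>
      calc 2^(n+1+1) = 2 * 2^(n+1) := by ring
      _ < 2 * 9^n := by omega
      _ ≤ 9^(n+1) := by ring_nf; omega
  exact_mod_cast h

theorem stmt_15 (N : ℕ) (hN : 1 ≤ N) (b : ℕ) (hb : b = 2 * N)
    (A : ℕ) (hA1 : 1 ≤ A) (hA2 : A ≤ 2^N)
    (R : ℝ)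
    (hR : R = ((A:ℝ) * (3/4:ℝ)^b + (2:ℝ)^N * (1/4:ℝ)^b) /
      ((2:ℝ)^N * (3/4:ℝ)^b + (A:ℝ) * (1/4:ℝ)^b)) :
    |R - (A:ℝ)/2^N| < 1/2^(N+1) ∧ round ((2:ℝ)^N * R) = (A : ℤ) := by
  subst hb hR
  have hA0 : (1:ℝ) ≤ (A:ℝ) := by exact_mod_cast hA1
  have hA2' : (A:ℝ) ≤ 2^N := by
    have := hA2
    push_cast at this ⊢
    exact_mod_cast this
  have h2N : (0:ℝ) < 2^N := by positivity
  have hD : (0:ℝ) < (2:ℝ)^N * (3/4)^(2*N) + (A:ℝ) * (1/4)^(2*N) := by positivity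
  have key : ((A:ℝ) * (3/4)^(2*N) + 2^N * (1/4)^(2*N)) /
        ((2:ℝ)^N * (3/4)^(2*N) + (A:ℝ) * (1/4)^(2*N)) - (A:ℝ)/2^N
      = ((1/4:ℝ)^(2*N) * ((2^N - A) * (2^N + A))) /
        (2^N * ((2:ℝ)^N * (3/4)^(2*N) + (A:ℝ) * (1/4)^(2*N))) := by
    field_simp
    ring
  have hnum : (0:ℝ) ≤ (1/4:ℝ)^(2*N) * ((2^N - (A:ℝ)) * (2^N + A)) := by
    have h1 : (0:ℝ) ≤ 2^N - (A:ℝ) := by linarith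
    have h2 : (0:ℝ) ≤ 2^N + (A:ℝ) := by positivity
    positivity
  have habs : |((A:ℝ) * (3/4)^(2*N) + 2^N * (1/4)^(2*N)) /
        ((2:ℝ)^N * (3/4)^(2*N) + (A:ℝ) * (1/4)^(2*N)) - (A:ℝ)/2^N|
      = ((1/4:ℝ)^(2*N) * ((2^N - A) * (2^N + A))) /
        (2^N * ((2:ℝ)^N * (3/4)^(2*N) + (A:ℝ) * (1/4)^(2*N))) := by
    rw [key, abs_of_nonneg]
    positivity
  have hlt : ((1/4:ℝ)^(2*N) * ((2^N - A) * (2^N + A))) /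
        (2^N * ((2:ℝ)^N * (3/4)^(2*N) + (A:ℝ) * (1/4)^(2*N))) < 1/2^(N+1) := by
    rw [div_lt_div_iff₀ (by positivity) (by positivity)]
    have hkey : (2:ℝ)^(N+1) * (1/4:ℝ)^(2*N) * 2^(2*N) < 2^(2*N) * (3/4:ℝ)^(2*N) := by
      have h9 := stmt_15_pow N hN
      have h4 : (0:ℝ) < (4:ℝ)^(2*N) := by positivity
      have e1 : (1/4:ℝ)^(2*N) = 1/(4:ℝ)^(2*N) := by rw [div_pow]; norm_num
      have e2 : (3/4:ℝ)^(2*N) = (3:ℝ)^(2*N)/(4:ℝ)^(2*N) := by rw [div_pow]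
      have e3 : (3:ℝ)^(2*N) = 9^N := by
        rw [pow_mul]; norm_num
      rw [e1, e2, e3,
        show (2:ℝ)^(N+1) * (1/(4:ℝ)^(2*N)) * 2^(2*N) = (2^(N+1) * 2^(2*N))/4^(2*N) from by ring,
        show (2:ℝ)^(2*N) * ((9:ℝ)^N/(4:ℝ)^(2*N)) = (2^(2*N)*9^N)/4^(2*N) from by ring,
        div_lt_div_iff₀ h4 h4]
      nlinarith [mul_lt_mul_of_pos_right h9 (show (0:ℝ) < 2^(2*N)*4^(2*N) by positivity)]
    have hb1 : ((2:ℝ)^N - A) * (2^N + A) ≤ 2^(2*N) := by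
      have : (2:ℝ)^(2*N) = 2^N * 2^N := by rw [two_mul, pow_add]
      nlinarith
    have hb2 : (2:ℝ)^N * ((2:ℝ)^N * (3/4)^(2*N) + (A:ℝ) * (1/4)^(2*N))
        ≥ 2^(2*N) * (3/4:ℝ)^(2*N) := by
      have e : (2:ℝ)^(2*N) = 2^N * 2^N := by rw [two_mul, pow_add]
      have h3 : (0:ℝ) ≤ (A:ℝ)*(1/4:ℝ)^(2*N) := by positivity
      rw [e]
      nlinarith [mul_nonneg h2N.le h3]
    calc (1/4:ℝ)^(2*N) * ((2^N - (A:ℝ)) * (2^N + A)) * 2^(N+1)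
        ≤ (1/4:ℝ)^(2*N) * 2^(2*N) * 2^(N+1) := by
          gcongr <;> first | positivity | exact hb1
      _ = (2:ℝ)^(N+1) * (1/4:ℝ)^(2*N) * 2^(2*N) := by ring
      _ < 2^(2*N) * (3/4:ℝ)^(2*N) := hkey
      _ ≤ 1 * (2^N * ((2:ℝ)^N * (3/4)^(2*N) + (A:ℝ) * (1/4)^(2*N))) := by
          rw [one_mul]; exact hb2
  have h1 : |((A:ℝ) * (3/4)^(2*N) + 2^N * (1/4)^(2*N)) /
        ((2:ℝ)^N * (3/4)^(2*N) + (A:ℝ) * (1/4)^(2*N)) - (A:ℝ)/2^N| < 1/2^(N+1) := by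
    rw [habs]; exact hlt
  refine ⟨h1, ?_⟩
  set R := ((A:ℝ) * (3/4)^(2*N) + 2^N * (1/4)^(2*N)) /
        ((2:ℝ)^N * (3/4)^(2*N) + (A:ℝ) * (1/4)^(2*N)) with hRdef
  have h2 : |(2:ℝ)^N * R - A| < 1/2 := by
    have : (2:ℝ)^N * R - A = 2^N * (R - A/2^N) := by field_simp
    rw [this, abs_mul, abs_of_pos h2N]
    have : (2:ℝ)^N * (1/2^(N+1)) = 1/2 := by
      rw [pow_succ]; field_simp
    calc (2:ℝ)^N * |R - (A:ℝ)/2^N| < 2^N * (1/2^(N+1)) := by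
          exact (mul_lt_mul_iff_right₀ h2N).mpr h1
      _ = 1/2 := this
  rw [round_eq]
  rw [abs_lt] at h2
  have : ⌊(2:ℝ)^N * R + 1/2⌋ = (A:ℤ) := by
    rw [Int.floor_eq_iff]
    constructor
    · push_cast; linarith
    · push_cast; linarith
  exact this
end
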